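/- The Graver basis of an integer matrix A is finite. -/

import Mathlib

/-- The conformal partial order on integer vectors. -/
def Conf {ι : Type*} (x y : ι → ℤ) : Prop :=
  ∀ i, |x i| ≤ |y i| ∧ 0 ≤ x i * y i

/-- The Graver basis of an integer matrix `A`: the set of `⊑`-minimal elements of
`{x : Ax = 0, x ≠ 0}`. -/
def graverBasis {κ ι : Type*} [Fintype ι] (A : Matrix κ ι ℤ) : Set (ι → ℤ) :=
  {g | A.mulVec g = 0 ∧ g ≠ 0 ∧
    ∀ y : ι → ℤ, A.mulVec y = 0 → y ≠ 0 → Conf y g → y = g}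

/-- sign-split embedding -/
def splitEmb {ι : Type*} (x : ι → ℤ) : ι × Bool → ℕ :=
  fun p => if p.2 then (x p.1).toNat else (-(x p.1)).toNat

lemma splitEmb_injective {ι : Type*} : Function.Injective (splitEmb (ι := ι)) := by
  intro x y h
  funext i
  have h1 := congrFun h (i, true)
  have h2 := congrFun h (i, false)
  simp only [splitEmb, if_true, Bool.false_eq_true, if_false] at h1 h2
  omega

lemma conf_of_splitEmb_le {ι : Type*} {x y : ι → ℤ} (h : splitEmb x ≤ splitEmb y) :
    Conf x y := by
  intro i
  have h1 := h (i, true)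
  have h2 := h (i, false)
  simp only [splitEmb, if_true, Bool.false_eq_true, if_false] at h1 h2
  rcases lt_trichotomy (x i) 0 with hx | hx | hx
  · have hy : y i < 0 := by omega
    rw [abs_of_neg hx, abs_of_neg hy]
    exact ⟨by omega, (mul_pos_of_neg_of_neg hx hy).le⟩
  · simp [hx]
  · have hy : 0 < y i := by omega
    rw [abs_of_pos hx, abs_of_pos hy]
    exact ⟨by omega, mul_nonneg hx.le hy.le⟩

/-- The Graver basis of an integer matrix is finite. -/
theorem graverBasis_finite (m n : ℕ) (A : Matrix (Fin m) (Fin n) ℤ) :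
    (graverBasis A).Finite := by
  have hanti : IsAntichain (· ≤ ·) (splitEmb '' graverBasis A) := by
    rintro _ ⟨g, hg, rfl⟩ _ ⟨h, hh, rfl⟩ hne hle
    exact hne (congrArg splitEmb (hh.2.2 g hg.1 hg.2.1 (conf_of_splitEmb_le hle)))
  have hpwo : Set.IsPWO (Set.univ : Set (Fin n × Bool → ℕ)) := Set.isPWO_of_wellQuasiOrderedLE Set.univ
  have hfin : (splitEmb '' graverBasis A).Finite :=
    hanti.finite_of_partiallyWellOrderedOn (hpwo.mono (Set.subset_univ _))
  exact Set.Finite.of_finite_image hfin (splitEmb_injective.injOn)
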